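/- (Nye's formula) Let φ : ℝ³ → ℝ³ be differentiable at x ∈ ℝ³ and let Anti(φ) be the skew-symmetric matrix field Anti(φ(y)) = [[0, −φ₃(y), φ₂(y)], [φ₃(y), 0, −φ₁(y)], [−φ₂(y), φ₁(y), 0]]. Then the row-wise Curl of the matrix field Anti(φ) satisfies Curl(Anti φ)(x) = tr(Dφ(x))·𝟙 − (Dφ(x))ᵀ, where Dφ(x) is the Jacobian matrix (∂φᵢ/∂xⱼ). -/
import Mathlib


open Matrix MeasureTheory Real Filter Asymptotics

noncomputable section

abbrev Mat3 := Matrix (Fin 3) (Fin 3) ℝ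

/-- Partial derivative of a scalar field in the `j`-th coordinate direction. -/
def pd (j : Fin 3) (f : (Fin 3 → ℝ) → ℝ) (x : Fin 3 → ℝ) : ℝ :=
  fderiv ℝ f x (Pi.single j 1)

/-- Jacobian matrix (Du)ᵢⱼ = ∂uᵢ/∂xⱼ of a vector field. -/
def jac (u : (Fin 3 → ℝ) → Fin 3 → ℝ) (x : Fin 3 → ℝ) : Mat3 :=
  Matrix.of fun i j => pd j (fun y => u y i) x

/-- Symmetric part of a matrix. -/
def symm3 (P : Mat3) : Mat3 := (1/2 : ℝ) • (P + Pᵀ)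

/-- Skew-symmetric part of a matrix. -/
def skew3 (P : Mat3) : Mat3 := (1/2 : ℝ) • (P - Pᵀ)

/-- Deviatoric part of a matrix. -/
def dev3 (P : Mat3) : Mat3 := P - (Matrix.trace P / 3) • (1 : Mat3)

/-- Squared Frobenius norm. -/
def frob2 (P : Mat3) : ℝ := ∑ i, ∑ j, (P i j)^2

/-- Frobenius inner product. -/
def frobInner (P Q : Mat3) : ℝ := ∑ i, ∑ j, P i j * Q i j

/-- Row-wise divergence of a matrix field. -/
def matDiv (σ : (Fin 3 → ℝ) → Mat3) (x : Fin 3 → ℝ) : Fin 3 → ℝ :=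
  fun i => ∑ j, pd j (fun y => σ y i j) x

/-- Curl of a vector field. -/
def curl3 (v : (Fin 3 → ℝ) → Fin 3 → ℝ) (x : Fin 3 → ℝ) : Fin 3 → ℝ :=
  ![pd 1 (fun y => v y 2) x - pd 2 (fun y => v y 1) x,
    pd 2 (fun y => v y 0) x - pd 0 (fun y => v y 2) x,
    pd 0 (fun y => v y 1) x - pd 1 (fun y => v y 0) x]

/-- Row-wise Curl of a matrix field. -/
def matCurl (P : (Fin 3 → ℝ) → Mat3) (x : Fin 3 → ℝ) : Mat3 :=
  Matrix.of fun i => curl3 (fun y => P y i) x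

/-- The torsion displacement field u(x) = ϑ·(−x₂x₃, x₁x₃, 0). -/
def torsionU (ϑ : ℝ) (x : Fin 3 → ℝ) : Fin 3 → ℝ :=
  ![-(ϑ * x 1 * x 2), ϑ * x 0 * x 2, 0]

/-- The skew-symmetric matrix associated with a vector: Anti(v)·b = v × b. -/
def anti3 (v : Fin 3 → ℝ) : Mat3 :=
  Matrix.of ![![0, -v 2, v 1], ![v 2, 0, -v 0], ![-v 1, v 0, 0]]


lemma pd_neg (j : Fin 3) (f : (Fin 3 → ℝ) → ℝ) (x : Fin 3 → ℝ) :
    pd j (fun y => -f y) x = -pd j f x := by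
  simp [pd, fderiv_neg]

lemma pd_zero (j : Fin 3) (x : Fin 3 → ℝ) :
    pd j (fun _ => (0 : ℝ)) x = 0 := by
  simp [pd]

/-- Nye's formula: Curl(Anti φ) = tr(Dφ)·𝟙 − (Dφ)ᵀ at a point of
differentiability. -/
theorem nye_formula (φ : (Fin 3 → ℝ) → Fin 3 → ℝ) (x : Fin 3 → ℝ)
    (hφ : DifferentiableAt ℝ φ x) :
    matCurl (fun y => anti3 (φ y)) x
      = Matrix.trace (jac φ x) • (1 : Mat3) - (jac φ x)ᵀ := by
  ext i j
  fin_cases i <;> fin_cases j <;>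
    simp [matCurl, curl3, anti3, jac, Matrix.trace, Matrix.diag, Fin.sum_univ_three,
      pd_neg, pd_zero, Matrix.one_apply] <;> ring
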